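/- arXiv:0804.0646 — 2 statements merged into one kernel-verified Lean document; each statement's English description precedes it below -/
import Mathlib

section
/- Let T = {γ ∈ ℝ^n : γ_i < 0 for all i, Σ_{i=1}^n γ_i > −1} and f(γ) = ½ Σ_{i=1}^n γ_i log(−γ_i) − ½ (1 + Σ_{j=1}^n γ_j) log(1 + Σ_{j=1}^n γ_j). Then for every point s in the frontier ∂T = closure(T) \ T and every C > 0 there exists δ > 0 such that for all γ ∈ T with ‖γ − s‖ < δ one has ‖∇f(γ)‖ ≥ C. (The covector df has arbitrarily large length near the boundary ∂T.) -/
open scoped BigOperators RealInnerProductSpace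

/-- The open cell `T = {γ ∈ ℝⁿ : γᵢ < 0, ∑ γᵢ > −1}`, inside Euclidean space. -/
def openCellT (n : ℕ) : Set (EuclideanSpace ℝ (Fin n)) :=
  {γ | (∀ i, γ i < 0) ∧ -1 < ∑ i, γ i}


/-- The potential `f` of the T-dual Lagrangian `L(O(−1), h_{−1})`. -/
noncomputable def potentialF (n : ℕ) (γ : EuclideanSpace ℝ (Fin n)) : ℝ :=
  (1 / 2) * ∑ i, γ i * Real.log (-γ i)
    - (1 / 2) * (1 + ∑ j, γ j) * Real.log (1 + ∑ j, γ j)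

noncomputable def Dmap (n : ℕ) (γ : EuclideanSpace ℝ (Fin n)) :
    EuclideanSpace ℝ (Fin n) →L[ℝ] ℝ :=
  (1/2 : ℝ) • (∑ i, (Real.log (-γ i) + 1) • (EuclideanSpace.proj i : EuclideanSpace ℝ (Fin n) →L[ℝ] ℝ))
    - (1/2 : ℝ) • ((Real.log (1 + ∑ i, γ i) + 1) • (∑ i, (EuclideanSpace.proj i : EuclideanSpace ℝ (Fin n) →L[ℝ] ℝ)))

lemma hasFDerivAt_potentialF (n : ℕ) (γ : EuclideanSpace ℝ (Fin n))
    (h1 : ∀ i, γ i < 0) (h2 : 0 < 1 + ∑ i, γ i) :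
    HasFDerivAt (potentialF n) (Dmap n γ) γ := by
  have hL : HasFDerivAt (fun x : EuclideanSpace ℝ (Fin n) => ∑ i, x i)
      (∑ i, (EuclideanSpace.proj i : EuclideanSpace ℝ (Fin n) →L[ℝ] ℝ)) γ := by
    simpa using HasFDerivAt.fun_sum (fun i _ =>
      (EuclideanSpace.proj (𝕜 := ℝ) i).hasFDerivAt (x := γ))
  have h1' : HasFDerivAt (fun x : EuclideanSpace ℝ (Fin n) => ∑ i, x i * Real.log (-x i))
      (∑ i, (Real.log (-γ i) + 1) • (EuclideanSpace.proj i : EuclideanSpace ℝ (Fin n) →L[ℝ] ℝ)) γ := by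
    apply HasFDerivAt.fun_sum
    intro i _
    have hu : HasDerivAt (fun t : ℝ => t * Real.log (-t)) (Real.log (-γ i) + 1) (γ i) := by
      have hne : -γ i ≠ 0 := by nlinarith [h1 i]
      have h₁ : HasDerivAt (fun t : ℝ => Real.log (-t)) (-(1 / (-γ i)) ) (γ i) := by
        have := (Real.hasDerivAt_log hne).comp (γ i) (hasDerivAt_neg (γ i))
        simpa [Function.comp_def, div_eq_mul_inv] using this
      have := (hasDerivAt_id (γ i)).mul h₁
      convert this using 1
      all_goals try rfl
      have : γ i ≠ 0 := by nlinarith [h1 i]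
      field_simp
      simp only [id]; ring
    exact hu.comp_hasFDerivAt γ ((EuclideanSpace.proj (𝕜 := ℝ) i).hasFDerivAt)
  have h2' : HasFDerivAt (fun x : EuclideanSpace ℝ (Fin n) => (1 + ∑ i, x i) * Real.log (1 + ∑ i, x i))
      ((Real.log (1 + ∑ i, γ i) + 1) • (∑ i, (EuclideanSpace.proj i : EuclideanSpace ℝ (Fin n) →L[ℝ] ℝ))) γ := by
    have hv : HasDerivAt (fun t : ℝ => (1 + t) * Real.log (1 + t))
        (Real.log (1 + ∑ i, γ i) + 1) (∑ i, γ i) := by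
      have hne : (1 + ∑ i, γ i) ≠ 0 := ne_of_gt h2
      have h₀ : HasDerivAt (fun t : ℝ => 1 + t) 1 (∑ i, γ i) := by
        simpa using (hasDerivAt_id (∑ i, γ i)).const_add 1
      have h₁ : HasDerivAt (fun t : ℝ => Real.log (1 + t)) (1 / (1 + ∑ i, γ i)) (∑ i, γ i) := by
        simpa [Function.comp_def] using (Real.hasDerivAt_log hne).comp (∑ i, γ i) h₀
      have := h₀.mul h₁
      convert this using 1
      all_goals try rfl
      field_simp
    exact hv.comp_hasFDerivAt γ hL
  have := ((h1'.const_mul (1/2 : ℝ)).sub ((h2'.const_mul (1/2 : ℝ))))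
  convert this using 1
  all_goals try rfl
  · ext x
    simp only [potentialF]
    rw [Pi.sub_apply]
    ring

lemma grad_coord (n : ℕ) (γ : EuclideanSpace ℝ (Fin n))
    (h1 : ∀ i, γ i < 0) (h2 : 0 < 1 + ∑ i, γ i) (j : Fin n) :
    |(1/2 : ℝ) * (Real.log (-γ j) - Real.log (1 + ∑ i, γ i))|
      ≤ ‖gradient (potentialF n) γ‖ := by
  have hF := hasFDerivAt_potentialF n γ h1 h2
  have hg : HasGradientAt (potentialF n)
      ((InnerProductSpace.toDual ℝ (EuclideanSpace ℝ (Fin n))).symm (Dmap n γ)) γ :=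
    (hasFDerivAt_iff_hasGradientAt).1 hF
  have hgr := hg.gradient
  rw [hgr]
  have hval : (Dmap n γ) (EuclideanSpace.single j (1:ℝ))
      = (1/2 : ℝ) * (Real.log (-γ j) - Real.log (1 + ∑ i, γ i)) := by
    simp [Dmap, PiLp.proj_apply, EuclideanSpace.single_apply,
      Finset.sum_ite_eq', mul_comm]
    ring
  have hinner := InnerProductSpace.toDual_symm_apply (𝕜 := ℝ)
    (x := EuclideanSpace.single j (1:ℝ)) (y := Dmap n γ)
  have key := abs_real_inner_le_norm
    ((InnerProductSpace.toDual ℝ (EuclideanSpace ℝ (Fin n))).symm (Dmap n γ))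
    (EuclideanSpace.single j (1:ℝ))
  rw [hinner, hval] at key
  simpa [EuclideanSpace.norm_single] using key

lemma abs_coord_le (n : ℕ) (x : EuclideanSpace ℝ (Fin n)) (j : Fin n) : |x j| ≤ ‖x‖ := by
  rw [EuclideanSpace.norm_eq, ← Real.sqrt_sq_eq_abs]
  apply Real.sqrt_le_sqrt
  have h := Finset.single_le_sum (f := fun i => ‖x i‖ ^ 2)
    (fun i _ => sq_nonneg _) (Finset.mem_univ j)
  simpa [Real.norm_eq_abs, sq_abs] using h

lemma sum_coord_bound (n : ℕ) (x : EuclideanSpace ℝ (Fin n)) :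
    |∑ i, x i| ≤ n * ‖x‖ := by
  calc |∑ i, x i| ≤ ∑ i, |x i| := Finset.abs_sum_le_sum_abs _ _
    _ ≤ ∑ _i : Fin n, ‖x‖ := Finset.sum_le_sum fun i _ => abs_coord_le n x i
    _ = n * ‖x‖ := by simp [mul_comm]

theorem stmt_8 (n : ℕ) (hn : 1 ≤ n)
    (s : EuclideanSpace ℝ (Fin n)) (hs : s ∈ closure (openCellT n) \ openCellT n) :
    ∀ C : ℝ, 0 < C → ∃ δ : ℝ, 0 < δ ∧
      ∀ γ ∈ openCellT n, ‖γ - s‖ < δ → C ≤ ‖gradient (potentialF n) γ‖ := by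
  obtain ⟨hscl, hsnot⟩ := hs
  have hn0 : (0:ℝ) < n := by exact_mod_cast hn
  have hproj : ∀ i : Fin n, Continuous fun γ : EuclideanSpace ℝ (Fin n) => γ i :=
    fun i => (EuclideanSpace.proj (𝕜 := ℝ) i).continuous
  have hsumc : Continuous fun γ : EuclideanSpace ℝ (Fin n) => ∑ i, γ i :=
    continuous_finset_sum _ fun i _ => hproj i
  have hclosed : IsClosed {γ : EuclideanSpace ℝ (Fin n) | (∀ i, γ i ≤ 0) ∧ -1 ≤ ∑ i, γ i} := by
    have he : {γ : EuclideanSpace ℝ (Fin n) | (∀ i, γ i ≤ 0) ∧ -1 ≤ ∑ i, γ i}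
        = (⋂ i, {γ : EuclideanSpace ℝ (Fin n) | γ i ≤ 0}) ∩ {γ | -1 ≤ ∑ i, γ i} := by
      ext γ; simp [Set.mem_iInter]
    rw [he]
    exact (isClosed_iInter fun i => isClosed_le (hproj i) continuous_const).inter
      (isClosed_le continuous_const hsumc)
  have hsK : (∀ i, s i ≤ 0) ∧ -1 ≤ ∑ i, s i := by
    have hsub : openCellT n ⊆ {γ | (∀ i, γ i ≤ 0) ∧ -1 ≤ ∑ i, γ i} :=
      fun γ hγ => ⟨fun i => (hγ.1 i).le, hγ.2.le⟩
    exact closure_minimal hsub hclosed hscl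
  intro C hC
  have hcoordnear : ∀ γ : EuclideanSpace ℝ (Fin n), ∀ j, |γ j - s j| ≤ ‖γ - s‖ := by
    intro γ j
    have := abs_coord_le n (γ - s) j
    simpa using this
  have hsumnear : ∀ γ : EuclideanSpace ℝ (Fin n), |(∑ i, γ i) - ∑ i, s i| ≤ n * ‖γ - s‖ := by
    intro γ
    have h := sum_coord_bound n (γ - s)
    have he : ∑ i, (γ - s) i = (∑ i, γ i) - ∑ i, s i := by
      simp [Finset.sum_sub_distrib]
    rwa [he] at h
  by_cases hsum : ∑ i, s i = -1
  · -- boundary piece where the sum hits -1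
    set ε : ℝ := min (1/2) ((1/(2*n)) * Real.exp (-(2*C))) with hεdef
    have hεpos : 0 < ε := lt_min (by norm_num) (by positivity)
    refine ⟨ε / n, by positivity, ?_⟩
    rintro γ ⟨hγ1, hγ2⟩ hnear
    have hbpos : 0 < 1 + ∑ i, γ i := by linarith
    have hblt : 1 + (∑ i, γ i) < ε := by
      have h1 := hsumnear γ
      have h2 : |(∑ i, γ i) - ∑ i, s i| < n * (ε / n) :=
        lt_of_le_of_lt h1 (mul_lt_mul_of_pos_left hnear hn0)
      rw [hsum] at h2
      have h3 : n * (ε / n) = ε := by field_simp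
      rw [h3] at h2
      have := (abs_lt.1 h2).2
      linarith
    -- choose a coordinate with -γ j large
    have hnonempty : (Finset.univ : Finset (Fin n)).Nonempty := by
      have : Nonempty (Fin n) := ⟨⟨0, hn⟩⟩
      exact Finset.univ_nonempty
    obtain ⟨j, _, hj⟩ := Finset.exists_le_of_sum_le (f := fun _ : Fin n => (1 - (1 + ∑ i, γ i))/n)
      (g := fun i => -γ i) hnonempty (by
        rw [Finset.sum_const, Finset.card_univ, Fintype.card_fin, nsmul_eq_mul]
        have : ∑ i, -γ i = -(∑ i, γ i) := by simp
        rw [this]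
        have hx : (n:ℝ) * ((1 - (1 + ∑ i, γ i))/n) = 1 - (1 + ∑ i, γ i) := by
          field_simp
        rw [hx]
        linarith)
    have hj' : 1/(2*n) ≤ -γ j := by
      have h4 : (1:ℝ)/2 ≤ 1 - (1 + ∑ i, γ i) := by
        have : ε ≤ 1/2 := min_le_left _ _
        linarith
      calc (1:ℝ)/(2*n) = ((1:ℝ)/2)/n := by ring
        _ ≤ (1 - (1 + ∑ i, γ i))/n := by gcongr
        _ ≤ -γ j := hj
    have hloga : Real.log (1/(2*n)) ≤ Real.log (-γ j) :=
      Real.log_le_log (by positivity) hj'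
    have hlogb : Real.log (1 + ∑ i, γ i) ≤ Real.log (1/(2*n)) - 2*C := by
      have h5 : Real.log (1 + ∑ i, γ i) ≤ Real.log ε := Real.log_le_log hbpos hblt.le
      have h6 : Real.log ε ≤ Real.log ((1/(2*n)) * Real.exp (-(2*C))) :=
        Real.log_le_log hεpos (min_le_right _ _)
      rw [Real.log_mul (by positivity) (Real.exp_ne_zero _), Real.log_exp] at h6
      linarith
    have hgr := grad_coord n γ hγ1 hbpos j
    calc C ≤ (1/2 : ℝ) * (Real.log (-γ j) - Real.log (1 + ∑ i, γ i)) := by linarith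
      _ ≤ |(1/2 : ℝ) * (Real.log (-γ j) - Real.log (1 + ∑ i, γ i))| := le_abs_self _
      _ ≤ _ := hgr
  · -- boundary piece where some coordinate vanishes
    have hsumgt : -1 < ∑ i, s i := lt_of_le_of_ne hsK.2 (Ne.symm hsum)
    obtain ⟨i₀, hi₀⟩ : ∃ i, s i = 0 := by
      by_contra h
      push_neg at h
      exact hsnot ⟨fun i => lt_of_le_of_ne (hsK.1 i) (h i), hsumgt⟩
    have hBpos : 0 < 1 + ∑ i, s i := by linarith
    set B : ℝ := 1 + ∑ i, s i with hBdef
    set δ : ℝ := min (B/(2*n)) ((B/2) * Real.exp (-(2*C))) with hδdef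
    have hδpos : 0 < δ := lt_min (by positivity) (by positivity)
    refine ⟨δ, hδpos, ?_⟩
    rintro γ ⟨hγ1, hγ2⟩ hnear
    have hbpos : 0 < 1 + ∑ i, γ i := by linarith
    have hbig : B/2 < 1 + ∑ i, γ i := by
      have h1 := hsumnear γ
      have h2 : |(∑ i, γ i) - ∑ i, s i| < n * δ :=
        lt_of_le_of_lt h1 (mul_lt_mul_of_pos_left hnear hn0)
      have hδ1 : n * δ ≤ B/2 := by
        have h3 : δ ≤ B/(2*n) := min_le_left _ _
        have h4 : (n:ℝ) * δ ≤ n * (B/(2*n)) := by nlinarith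
        have h5 : (n:ℝ) * (B/(2*n)) = B/2 := by field_simp
        linarith
      have := (abs_lt.1 h2).1
      have hBs : B = 1 + ∑ i, s i := hBdef
      linarith
    have hasmall : -γ i₀ < δ := by
      have h1 := hcoordnear γ i₀
      rw [hi₀] at h1
      have h2 : |γ i₀| < δ := by
        have := lt_of_le_of_lt h1 hnear
        simpa using this
      linarith [(abs_lt.1 h2).1]
    have hγneg := hγ1 i₀
    have hloga : Real.log (-γ i₀) < Real.log (B/2) - 2*C := by
      have h1 : Real.log (-γ i₀) < Real.log ((B/2) * Real.exp (-(2*C))) :=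
        Real.log_lt_log (by linarith) (lt_of_lt_of_le hasmall (min_le_right _ _))
      rw [Real.log_mul (by positivity) (Real.exp_ne_zero _), Real.log_exp] at h1
      linarith
    have hlogb : Real.log (B/2) ≤ Real.log (1 + ∑ i, γ i) :=
      Real.log_le_log (by positivity) hbig.le
    have hgr := grad_coord n γ hγ1 hbpos i₀
    calc C ≤ -((1/2 : ℝ) * (Real.log (-γ i₀) - Real.log (1 + ∑ i, γ i))) := by linarith
      _ ≤ |(1/2 : ℝ) * (Real.log (-γ i₀) - Real.log (1 + ∑ i, γ i))| := neg_le_abs _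
      _ ≤ _ := hgr
end

section
/- Let T = {γ ∈ ℝ^n : γ_i < 0 for all i, Σ_{i=1}^n γ_i > −1} and f(γ) = ½ Σ_{i=1}^n γ_i log(−γ_i) − ½ (1 + Σ_{j=1}^n γ_j) log(1 + Σ_{j=1}^n γ_j). Then for every s ∈ ∂T = closure(T) \ T there exist δ > 0 and a constant c < 1 such that for all γ ∈ T with ‖γ − s‖ < δ one has ⟨s − γ, ∇f(γ)⟩ ≤ c · ‖s − γ‖ · ‖∇f(γ)‖. (Near any boundary point, the gradient ∇f never points in the direction from γ to s.) -/
open scoped BigOperators RealInnerProductSpace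
open Real

noncomputable def gradF (n : ℕ) (γ : EuclideanSpace ℝ (Fin n)) : EuclideanSpace ℝ (Fin n) :=
  WithLp.toLp 2 (fun i => (1/2) * (Real.log (-γ i) - Real.log (1 + ∑ j, γ j)))

noncomputable def sumCLM (n : ℕ) : EuclideanSpace ℝ (Fin n) →L[ℝ] ℝ :=
  ∑ i, EuclideanSpace.proj i

lemma sumCLM_apply (n : ℕ) (v : EuclideanSpace ℝ (Fin n)) : sumCLM n v = ∑ i, v i := by
  simp [sumCLM]

lemma hasDerivAt_tlognegt (t : ℝ) (ht : t < 0) :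
    HasDerivAt (fun u : ℝ => u * Real.log (-u)) (Real.log (-t) + 1) t := by
  have h1 : HasDerivAt (fun u : ℝ => Real.log (-u)) (1 / t) t := by
    have hneg : HasDerivAt (fun u : ℝ => -u) (-1) t := (hasDerivAt_id t).neg
    have hlog : HasDerivAt Real.log (-t)⁻¹ (-t) := Real.hasDerivAt_log (by linarith)
    have := hlog.comp t hneg
    refine this.congr_deriv ?_
    rw [inv_neg]
    ring
  have := (hasDerivAt_id t).mul h1
  refine this.congr_deriv ?_
  field_simp
  rw [id, div_self (ne_of_lt ht)]

lemma hasDerivAt_onep (u : ℝ) (hu : -1 < u) :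
    HasDerivAt (fun w : ℝ => (1 + w) * Real.log (1 + w)) (Real.log (1 + u) + 1) u := by
  have h0 : HasDerivAt (fun w : ℝ => 1 + w) 1 u := (hasDerivAt_id u).const_add 1
  have hlog : HasDerivAt Real.log (1 + u)⁻¹ (1 + u) := Real.hasDerivAt_log (by linarith)
  have h1 : HasDerivAt (fun w : ℝ => Real.log (1 + w)) ((1 + u)⁻¹ * 1) u := hlog.comp u h0
  have := h0.mul h1
  refine this.congr_deriv ?_
  have h : (1:ℝ) + u ≠ 0 := by linarith
  field_simp

lemma hasGradientAt_potentialF (n : ℕ) (γ : EuclideanSpace ℝ (Fin n))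
    (h1 : ∀ i, γ i < 0) (h2 : -1 < ∑ i, γ i) :
    HasGradientAt (potentialF n) (gradF n γ) γ := by
  rw [hasGradientAt_iff_hasFDerivAt]
  have hterm : ∀ i : Fin n, HasFDerivAt (fun x : EuclideanSpace ℝ (Fin n) => x i * Real.log (-(x i)))
      ((Real.log (-(γ i)) + 1) • (EuclideanSpace.proj i : EuclideanSpace ℝ (Fin n) →L[ℝ] ℝ)) γ := by
    intro i
    have hp : HasFDerivAt (fun x : EuclideanSpace ℝ (Fin n) => x i)
        (EuclideanSpace.proj i : EuclideanSpace ℝ (Fin n) →L[ℝ] ℝ) γ :=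
      (EuclideanSpace.proj i : EuclideanSpace ℝ (Fin n) →L[ℝ] ℝ).hasFDerivAt
    exact (hasDerivAt_tlognegt (γ i) (h1 i)).comp_hasFDerivAt γ hp
  have hsum : HasFDerivAt (fun x : EuclideanSpace ℝ (Fin n) => ∑ i, x i * Real.log (-(x i)))
      (∑ i, (Real.log (-(γ i)) + 1) • (EuclideanSpace.proj i : EuclideanSpace ℝ (Fin n) →L[ℝ] ℝ)) γ :=
    HasFDerivAt.fun_sum (fun i _ => hterm i)
  have hs : HasFDerivAt (fun x : EuclideanSpace ℝ (Fin n) => ∑ j, x j) (sumCLM n) γ := by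
    have h := (sumCLM n).hasFDerivAt (x := γ)
    have he : (⇑(sumCLM n)) = fun x : EuclideanSpace ℝ (Fin n) => ∑ j, x j :=
      funext (sumCLM_apply n)
    rwa [he] at h
  have h2' : HasFDerivAt (fun x : EuclideanSpace ℝ (Fin n) => (1 + ∑ j, x j) * Real.log (1 + ∑ j, x j))
      ((Real.log (1 + ∑ j, γ j) + 1) • sumCLM n) γ :=
    (hasDerivAt_onep _ h2).comp_hasFDerivAt (h₂ := fun w : ℝ => (1 + w) * Real.log (1 + w)) γ hs
  have hF : HasFDerivAt (potentialF n)
      ((1/2 : ℝ) • (∑ i, (Real.log (-(γ i)) + 1) • (EuclideanSpace.proj i : EuclideanSpace ℝ (Fin n) →L[ℝ] ℝ))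
        - (1/2 : ℝ) • ((Real.log (1 + ∑ j, γ j) + 1) • sumCLM n)) γ := by
    have := (hsum.const_smul (1/2 : ℝ)).sub (h2'.const_smul (1/2 : ℝ))
    refine HasFDerivAt.congr_of_eventuallyEq this (Filter.Eventually.of_forall fun x => ?_)
    · simp [potentialF, smul_eq_mul]
      ring
  refine hF.congr_fderiv (Eq.symm ?_)
  ext v
  simp only [InnerProductSpace.toDual_apply_apply, ContinuousLinearMap.sub_apply,
    ContinuousLinearMap.smul_apply, ContinuousLinearMap.sum_apply, sumCLM_apply,
    PiLp.proj_apply, smul_eq_mul]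
  rw [PiLp.inner_apply]
  simp only [RCLike.inner_apply, conj_trivial, gradF]
  rw [← mul_assoc]
  have hrw : (1/2:ℝ) * (Real.log (1 + ∑ j, γ j) + 1) * ∑ i, v i
      = ∑ i, (1/2:ℝ) * (Real.log (1 + ∑ j, γ j) + 1) * v i := by
    rw [Finset.mul_sum]
  have hrw2 : (1/2:ℝ) * ∑ x, (Real.log (-γ x) + 1) * v x
      = ∑ x, (1/2:ℝ) * ((Real.log (-γ x) + 1) * v x) := by
    rw [Finset.mul_sum]
  rw [hrw, hrw2, ← Finset.sum_sub_distrib]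
  apply Finset.sum_congr rfl
  intro i _
  ring

lemma coord_abs_le_norm {n : ℕ} (x : EuclideanSpace ℝ (Fin n)) (i : Fin n) : |x i| ≤ ‖x‖ := by
  rw [EuclideanSpace.norm_eq]
  have h1 : |x i| = Real.sqrt (|x i|^2) := (Real.sqrt_sq (abs_nonneg _)).symm
  rw [h1]
  apply Real.sqrt_le_sqrt
  rw [sq_abs]
  have : (x i)^2 = ‖x i‖^2 := by rw [Real.norm_eq_abs, sq_abs]
  rw [this]
  exact Finset.single_le_sum (f := fun j => ‖x j‖^2) (fun j _ => sq_nonneg _) (Finset.mem_univ i)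

lemma abs_log_le_of_mem {x lo hi : ℝ} (hlo : 0 < lo) (h1 : lo ≤ x) (h2 : x ≤ hi) :
    |Real.log x| ≤ |Real.log lo| + |Real.log hi| := by
  have hx : 0 < x := lt_of_lt_of_le hlo h1
  have l1 : Real.log lo ≤ Real.log x := Real.log_le_log hlo h1
  have l2 : Real.log x ≤ Real.log hi := Real.log_le_log hx h2
  exact le_trans (abs_le_max_abs_abs l1 l2)
    (max_le (le_add_of_nonneg_right (abs_nonneg _)) (le_add_of_nonneg_left (abs_nonneg _)))

lemma inner_sub_gradF {n : ℕ} (s γ : EuclideanSpace ℝ (Fin n)) (w : EuclideanSpace ℝ (Fin n)) :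
    ⟪s - γ, w⟫ = ∑ i, (s i - γ i) * w i := by
  rw [PiLp.inner_apply]
  simp [RCLike.inner_apply, mul_comm]

set_option maxHeartbeats 1000000 in
theorem stmt_9 (n : ℕ) (hn : 1 ≤ n) :
    ∀ s ∈ closure (openCellT n) \ openCellT n,
      ∃ δ : ℝ, 0 < δ ∧ ∃ c : ℝ, c < 1 ∧
        ∀ γ ∈ openCellT n, ‖γ - s‖ < δ →
          ⟪s - γ, gradient (potentialF n) γ⟫ ≤
            c * ‖s - γ‖ * ‖gradient (potentialF n) γ‖ := by
  intro s hs
  obtain ⟨hscl, hsnT⟩ := hs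
  haveI hNe : Nonempty (Fin n) := ⟨⟨0, hn⟩⟩
  have hn1 : (1:ℝ) ≤ (n:ℝ) := by exact_mod_cast hn
  have hnpos : (0:ℝ) < (n:ℝ) := by linarith
  -- closure facts
  have hsub : closure (openCellT n) ⊆
      {γ : EuclideanSpace ℝ (Fin n) | (∀ i, γ i ≤ 0) ∧ -1 ≤ ∑ i, γ i} := by
    apply closure_minimal
    · intro γ hγ
      exact ⟨fun i => le_of_lt (hγ.1 i), le_of_lt hγ.2⟩
    · have hcont : ∀ i : Fin n, Continuous fun γ : EuclideanSpace ℝ (Fin n) => γ i :=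
        fun i => (EuclideanSpace.proj (𝕜 := ℝ) i).continuous
      have hset : {γ : EuclideanSpace ℝ (Fin n) | (∀ i, γ i ≤ 0) ∧ -1 ≤ ∑ i, γ i}
          = (⋂ i, {γ : EuclideanSpace ℝ (Fin n) | γ i ≤ 0})
            ∩ {γ : EuclideanSpace ℝ (Fin n) | -1 ≤ ∑ i, γ i} := by
        ext x
        simp [Set.mem_iInter]
      rw [hset]
      exact IsClosed.inter (isClosed_iInter fun i => isClosed_le (hcont i) continuous_const)
        (isClosed_le continuous_const (continuous_finset_sum _ fun i _ => hcont i))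
  obtain ⟨hle, hsum⟩ := hsub hscl
  -- helper: coordinate bounds
  have hco : ∀ γ : EuclideanSpace ℝ (Fin n), ∀ i, |γ i - s i| ≤ ‖γ - s‖ := by
    intro γ i
    have h := coord_abs_le_norm (γ - s) i
    have he : (γ - s) i = γ i - s i := rfl
    rwa [he] at h
  have hsd : ∀ γ : EuclideanSpace ℝ (Fin n), |(∑ i, γ i) - ∑ i, s i| ≤ (n:ℝ) * ‖γ - s‖ := by
    intro γ
    rw [← Finset.sum_sub_distrib]
    refine le_trans (Finset.abs_sum_le_sum_abs _ _) ?_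
    refine le_trans (Finset.sum_le_sum fun i _ => hco γ i) ?_
    rw [Finset.sum_const, Finset.card_univ, Fintype.card_fin, nsmul_eq_mul]
  by_cases hA : (∑ i, s i) = -1
  · -- Case 2 : the sum hits the boundary -1
    obtain ⟨k, hk⟩ : ∃ k, s k ≤ -(1/(n:ℝ)) := by
      by_contra hcon
      push_neg at hcon
      have h1 : ∑ i, -(1/(n:ℝ)) < ∑ i, s i :=
        Finset.sum_lt_sum_of_nonempty Finset.univ_nonempty (fun i _ => hcon i)
      rw [Finset.sum_const, Finset.card_univ, Fintype.card_fin, nsmul_eq_mul] at h1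
      have : (n:ℝ) * -(1/(n:ℝ)) = -1 := by field_simp
      rw [this, hA] at h1
      exact lt_irrefl _ h1
    set B : Fin n → ℝ := fun i => |Real.log (-(s i)/2)| + |Real.log (2*(-(s i)))| with hB
    set K : ℝ := ∑ i, (if s i < 0 then (1/2)*(B i) else 0) with hKdef
    have hK0 : 0 ≤ K := Finset.sum_nonneg fun i _ => by
      split_ifs
      · positivity
      · exact le_refl 0
    set δ₁ : ℝ := Finset.univ.inf' Finset.univ_nonempty
      (fun i => if s i < 0 then (-(s i))/2 else 1) with hδ₁def
    have hδ₁pos : 0 < δ₁ := by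
      rw [hδ₁def, Finset.lt_inf'_iff]
      intro i _
      split_ifs with h
      · linarith
      · norm_num
    set δv : ℝ := min (min δ₁ (1/(2*(n:ℝ)))) (Real.exp (-(4*K+4))/(2*(n:ℝ)^2)) with hδv
    have hδpos : 0 < δv := by
      apply lt_min (lt_min hδ₁pos (by positivity)) (by positivity)
    refine ⟨δv, hδpos, 1/2, by norm_num, ?_⟩
    intro γ hγ hnorm
    obtain ⟨hγneg, hγsum⟩ := hγ
    have hgrad := (hasGradientAt_potentialF n γ hγneg hγsum).gradient
    rw [hgrad, inner_sub_gradF, norm_sub_rev s γ]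
    set A : ℝ := 1 + ∑ j, γ j with hAdef
    have hApos : 0 < A := by rw [hAdef]; linarith
    have hAle : A ≤ (n:ℝ) * δv := by
      have := hsd γ
      rw [hA] at this
      have h2 : |(∑ i, γ i) + 1| ≤ (n:ℝ) * ‖γ - s‖ := by
        convert this using 2; ring
      have h3 := (abs_le.mp h2).2
      have h4 : (n:ℝ) * ‖γ - s‖ ≤ (n:ℝ) * δv :=
        mul_le_mul_of_nonneg_left (le_of_lt hnorm) (le_of_lt hnpos)
      rw [hAdef]; linarith
    have hδ2 : δv ≤ 1/(2*(n:ℝ)) := le_trans (min_le_left _ _) (min_le_right _ _)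
    have hAle1 : A ≤ 1 := by
      have : (n:ℝ) * δv ≤ (n:ℝ) * (1/(2*(n:ℝ))) :=
        mul_le_mul_of_nonneg_left hδ2 (le_of_lt hnpos)
      have h5 : (n:ℝ) * (1/(2*(n:ℝ))) = 1/2 := by field_simp
      linarith [hAle]
    -- decomposition of the inner product
    have hsumdiff : ∑ i, (s i - γ i) = -A := by
      rw [Finset.sum_sub_distrib, hA, hAdef]; ring
    have hdecomp : ∑ i, (s i - γ i) * (gradF n γ i)
        = (∑ i, (s i - γ i) * ((1/2) * Real.log (-γ i))) + (1/2) * A * Real.log A := by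
      have hstep : ∀ i : Fin n, (s i - γ i) * (gradF n γ i)
          = (s i - γ i) * ((1/2) * Real.log (-γ i))
            - ((1/2) * Real.log A) * (s i - γ i) := by
        intro i
        have hgi : gradF n γ i = (1/2) * (Real.log (-γ i) - Real.log A) := rfl
        rw [hgi]; ring
      rw [Finset.sum_congr rfl (fun i _ => hstep i), Finset.sum_sub_distrib,
        ← Finset.mul_sum, hsumdiff]
      ring
    -- per-term bounds
    have hterm : ∀ i : Fin n, (s i - γ i) * ((1/2) * Real.log (-γ i))
        ≤ (if s i < 0 then (1/2)*(B i) else 0) * ‖γ - s‖ := by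
      intro i
      by_cases hsi : s i < 0
      · rw [if_pos hsi]
        have hd1 : δv ≤ (-(s i))/2 := by
          refine le_trans (le_trans (min_le_left _ _) (min_le_left _ _)) ?_
          have h := Finset.inf'_le (fun i => if s i < 0 then (-(s i))/2 else 1)
            (Finset.mem_univ i)
          rw [if_pos hsi] at h
          exact le_trans (le_of_eq hδ₁def) h
        have hci : |γ i - s i| ≤ (-(s i))/2 :=
          le_of_lt (lt_of_le_of_lt (hco γ i) (lt_of_lt_of_le hnorm hd1))
        obtain ⟨hcil, hcir⟩ := abs_le.mp hci
        have hlo : (-(s i))/2 ≤ -γ i := by linarith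
        have hhi : -γ i ≤ 2*(-(s i)) := by linarith
        have hlog : |Real.log (-γ i)| ≤ B i := by
          rw [hB]
          exact abs_log_le_of_mem (by linarith) hlo hhi
        have h1 : (s i - γ i) * ((1/2) * Real.log (-γ i))
            ≤ |s i - γ i| * |(1/2) * Real.log (-γ i)| := by
          calc (s i - γ i) * ((1/2) * Real.log (-γ i))
              ≤ |(s i - γ i) * ((1/2) * Real.log (-γ i))| := le_abs_self _
            _ = |s i - γ i| * |(1/2) * Real.log (-γ i)| := abs_mul _ _
        refine le_trans h1 ?_
        have h2 : |s i - γ i| ≤ ‖γ - s‖ := by rw [abs_sub_comm]; exact hco γ i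
        have h3 : |(1/2) * Real.log (-γ i)| ≤ (1/2) * (B i) := by
          rw [abs_mul, abs_of_nonneg (by norm_num : (0:ℝ) ≤ 1/2)]
          exact mul_le_mul_of_nonneg_left hlog (by norm_num)
        calc |s i - γ i| * |(1/2) * Real.log (-γ i)|
            ≤ ‖γ - s‖ * ((1/2) * (B i)) :=
              mul_le_mul h2 h3 (abs_nonneg _) (norm_nonneg _)
          _ = (1/2) * (B i) * ‖γ - s‖ := by ring
      · rw [if_neg hsi, zero_mul]
        have hsi0 : s i = 0 := le_antisymm (hle i) (not_lt.mp hsi)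
        have hnn : 0 ≤ s i - γ i := by rw [hsi0]; linarith [hγneg i]
        have hgl : Real.log (-γ i) ≤ 0 := by
          apply Real.log_nonpos (by linarith [hγneg i])
          have h := hco γ i
          rw [hsi0, sub_zero, abs_of_neg (hγneg i)] at h
          have : δv ≤ 1 := le_trans hδ2 (by rw [div_le_one (by positivity)]; linarith)
          linarith [lt_of_le_of_lt h hnorm]
        nlinarith [mul_nonneg hnn (neg_nonneg.mpr (by linarith [hgl] :
          (1/2) * Real.log (-γ i) ≤ 0))]
    have hAlog : (1/2) * A * Real.log A ≤ 0 := by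
      have := Real.log_nonpos (le_of_lt hApos) hAle1
      nlinarith
    have hsumle : ∑ i, (s i - γ i) * (gradF n γ i) ≤ K * ‖γ - s‖ := by
      rw [hdecomp]
      have h1 : ∑ i, (s i - γ i) * ((1/2) * Real.log (-γ i))
          ≤ ∑ i, (if s i < 0 then (1/2)*(B i) else 0) * ‖γ - s‖ :=
        Finset.sum_le_sum fun i _ => hterm i
      rw [← Finset.sum_mul] at h1
      linarith
    -- lower bound on the norm of the gradient
    have hsk0 : s k < 0 := by
      have h0 : (0:ℝ) < 1/(n:ℝ) := by positivity
      linarith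
    have hgk : 2*K + 2 ≤ gradF n γ k := by
      have hgi : gradF n γ k = (1/2) * (Real.log (-γ k) - Real.log A) := rfl
      have hd1 : δv ≤ (-(s k))/2 := by
        refine le_trans (le_trans (min_le_left _ _) (min_le_left _ _)) ?_
        have h := Finset.inf'_le (fun i => if s i < 0 then (-(s i))/2 else 1)
          (Finset.mem_univ k)
        rw [if_pos hsk0] at h
        exact le_trans (le_of_eq hδ₁def) h
      have hci : |γ k - s k| ≤ (-(s k))/2 :=
        le_of_lt (lt_of_le_of_lt (hco γ k) (lt_of_lt_of_le hnorm hd1))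
      obtain ⟨hcil, hcir⟩ := abs_le.mp hci
      have hlo : 1/(2*(n:ℝ)) ≤ -γ k := by
        have h5 : (1:ℝ)/(n:ℝ) ≤ -(s k) := by linarith
        have he : (1:ℝ)/(2*(n:ℝ)) = (1/(n:ℝ))/2 := by ring
        rw [he]
        linarith
      have h1 : Real.log (1/(2*(n:ℝ))) ≤ Real.log (-γ k) :=
        Real.log_le_log (by positivity) hlo
      have hAup : A ≤ Real.exp (-(4*K+4)) * (1/(2*(n:ℝ))) := by
        have hδ3 : δv ≤ Real.exp (-(4*K+4))/(2*(n:ℝ)^2) := min_le_right _ _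
        have : (n:ℝ) * δv ≤ (n:ℝ) * (Real.exp (-(4*K+4))/(2*(n:ℝ)^2)) :=
          mul_le_mul_of_nonneg_left hδ3 (le_of_lt hnpos)
        have heq : (n:ℝ) * (Real.exp (-(4*K+4))/(2*(n:ℝ)^2))
            = Real.exp (-(4*K+4)) * (1/(2*(n:ℝ))) := by
          field_simp
        linarith [hAle]
      have h2 : Real.log A ≤ -(4*K+4) + Real.log (1/(2*(n:ℝ))) := by
        have := Real.log_le_log hApos hAup
        rwa [Real.log_mul (Real.exp_ne_zero _) (by positivity), Real.log_exp] at this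
      rw [hgi]
      linarith
    have hnormg : 2*K + 2 ≤ ‖gradF n γ‖ := by
      refine le_trans ?_ (coord_abs_le_norm (gradF n γ) k)
      exact le_trans hgk (le_abs_self _)
    have hr : 0 ≤ ‖γ - s‖ := norm_nonneg _
    nlinarith [hsumle, hnormg, hK0, hr]
  · -- Case 1 : some coordinate hits 0, and the sum stays > -1
    have hlt : -1 < ∑ i, s i := lt_of_le_of_ne hsum (Ne.symm hA)
    obtain ⟨k, hk⟩ : ∃ k, s k = 0 := by
      by_contra hcon
      push_neg at hcon
      exact hsnT ⟨fun i => lt_of_le_of_ne (hle i) (hcon i), hlt⟩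
    set a : ℝ := 1 + ∑ i, s i with ha_def
    have ha : 0 < a := by rw [ha_def]; linarith
    set B : Fin n → ℝ := fun i => |Real.log (-(s i)/2)| + |Real.log (2*(-(s i)))| with hB
    set C : ℝ := |Real.log (a/2)| + |Real.log (2*a)| with hC
    have hC0 : 0 ≤ C := by rw [hC]; positivity
    set K : ℝ := ∑ i, (if s i < 0 then (1/2)*(B i + C) else 0) with hKdef
    have hK0 : 0 ≤ K := Finset.sum_nonneg fun i _ => by
      split_ifs
      · positivity
      · exact le_refl 0
    set δ₁ : ℝ := Finset.univ.inf' Finset.univ_nonempty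
      (fun i => if s i < 0 then (-(s i))/2 else 1) with hδ₁def
    have hδ₁pos : 0 < δ₁ := by
      rw [hδ₁def, Finset.lt_inf'_iff]
      intro i _
      split_ifs with h
      · linarith
      · norm_num
    set δv : ℝ := min (min δ₁ (a/(2*(n:ℝ)))) ((a/2) * Real.exp (-(4*K+4))) with hδv
    have hδpos : 0 < δv := by
      apply lt_min (lt_min hδ₁pos (by positivity)) (by positivity)
    refine ⟨δv, hδpos, 1/2, by norm_num, ?_⟩
    intro γ hγ hnorm
    obtain ⟨hγneg, hγsum⟩ := hγ
    have hgrad := (hasGradientAt_potentialF n γ hγneg hγsum).gradient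
    rw [hgrad, inner_sub_gradF, norm_sub_rev s γ]
    set A : ℝ := 1 + ∑ j, γ j with hAdef
    have hApos : 0 < A := by rw [hAdef]; linarith
    have hδ2 : δv ≤ a/(2*(n:ℝ)) := le_trans (min_le_left _ _) (min_le_right _ _)
    have hsd2 : |(∑ i, γ i) - ∑ i, s i| ≤ a/2 := by
      refine le_trans (hsd γ) ?_
      have h1 : (n:ℝ) * ‖γ - s‖ ≤ (n:ℝ) * δv :=
        mul_le_mul_of_nonneg_left (le_of_lt hnorm) (le_of_lt hnpos)
      have h2 : (n:ℝ) * δv ≤ (n:ℝ) * (a/(2*(n:ℝ))) :=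
        mul_le_mul_of_nonneg_left hδ2 (le_of_lt hnpos)
      have h3 : (n:ℝ) * (a/(2*(n:ℝ))) = a/2 := by field_simp
      linarith
    obtain ⟨hsd2l, hsd2r⟩ := abs_le.mp hsd2
    have hA1 : a/2 ≤ A := by rw [hAdef, ha_def] at *; linarith
    have hA2 : A ≤ 2*a := by rw [hAdef, ha_def] at *; linarith
    -- per-term bound
    have hterm : ∀ i : Fin n, (s i - γ i) * (gradF n γ i)
        ≤ (if s i < 0 then (1/2)*(B i + C) else 0) * ‖γ - s‖ := by
      intro i
      have hgi : gradF n γ i = (1/2) * (Real.log (-γ i) - Real.log A) := rfl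
      by_cases hsi : s i < 0
      · rw [if_pos hsi]
        have hd1 : δv ≤ (-(s i))/2 := by
          refine le_trans (le_trans (min_le_left _ _) (min_le_left _ _)) ?_
          have h := Finset.inf'_le (fun i => if s i < 0 then (-(s i))/2 else 1)
            (Finset.mem_univ i)
          rw [if_pos hsi] at h
          exact le_trans (le_of_eq hδ₁def) h
        have hci : |γ i - s i| ≤ (-(s i))/2 :=
          le_of_lt (lt_of_le_of_lt (hco γ i) (lt_of_lt_of_le hnorm hd1))
        obtain ⟨hcil, hcir⟩ := abs_le.mp hci
        have hlo : (-(s i))/2 ≤ -γ i := by linarith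
        have hhi : -γ i ≤ 2*(-(s i)) := by linarith
        have hlog : |Real.log (-γ i)| ≤ B i := by
          rw [hB]
          exact abs_log_le_of_mem (by linarith) hlo hhi
        have hAlog : |Real.log A| ≤ C := by
          rw [hC]
          exact abs_log_le_of_mem (by positivity) hA1 hA2
        have h1 : (s i - γ i) * (gradF n γ i) ≤ |s i - γ i| * |gradF n γ i| := by
          calc (s i - γ i) * (gradF n γ i) ≤ |(s i - γ i) * (gradF n γ i)| := le_abs_self _
            _ = |s i - γ i| * |gradF n γ i| := abs_mul _ _
        refine le_trans h1 ?_
        have h2 : |s i - γ i| ≤ ‖γ - s‖ := by rw [abs_sub_comm]; exact hco γ i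
        have h3 : |gradF n γ i| ≤ (1/2) * (B i + C) := by
          rw [hgi, abs_mul, abs_of_nonneg (by norm_num : (0:ℝ) ≤ 1/2)]
          exact mul_le_mul_of_nonneg_left
            (le_trans (abs_sub _ _) (add_le_add hlog hAlog)) (by norm_num)
        calc |s i - γ i| * |gradF n γ i|
            ≤ ‖γ - s‖ * ((1/2) * (B i + C)) :=
              mul_le_mul h2 h3 (abs_nonneg _) (norm_nonneg _)
          _ = (1/2) * (B i + C) * ‖γ - s‖ := by ring
      · rw [if_neg hsi, zero_mul]
        have hsi0 : s i = 0 := le_antisymm (hle i) (not_lt.mp hsi)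
        have hnn : 0 ≤ s i - γ i := by rw [hsi0]; linarith [hγneg i]
        have hγik : -γ i ≤ A := by
          have h := hco γ i
          rw [hsi0, sub_zero, abs_of_neg (hγneg i)] at h
          have h4 : a/(2*(n:ℝ)) ≤ a/2 := by
            rw [div_le_div_iff₀ (by positivity) (by norm_num)]
            nlinarith
          linarith [lt_of_le_of_lt h hnorm, hA1]
        have hgneg : gradF n γ i ≤ 0 := by
          rw [hgi]
          have : Real.log (-γ i) ≤ Real.log A :=
            Real.log_le_log (by linarith [hγneg i]) hγik
          nlinarith
        nlinarith [mul_nonneg hnn (neg_nonneg.mpr hgneg)]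
    have hsumle : ∑ i, (s i - γ i) * (gradF n γ i) ≤ K * ‖γ - s‖ := by
      have h1 := Finset.sum_le_sum fun i (_ : i ∈ Finset.univ) => hterm i
      rw [← Finset.sum_mul] at h1
      exact h1
    -- lower bound on the norm of the gradient
    have hgk : gradF n γ k ≤ -(2*K+2) := by
      have hgi : gradF n γ k = (1/2) * (Real.log (-γ k) - Real.log A) := rfl
      have hγk : -γ k ≤ ‖γ - s‖ := by
        have h := hco γ k
        rwa [hk, sub_zero, abs_of_neg (hγneg k)] at h
      have h1 : Real.log (-γ k) ≤ Real.log δv :=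
        Real.log_le_log (by linarith [hγneg k]) (le_of_lt (lt_of_le_of_lt hγk hnorm))
      have hδ3 : δv ≤ (a/2) * Real.exp (-(4*K+4)) := min_le_right _ _
      have h2 : Real.log δv ≤ Real.log (a/2) + (-(4*K+4)) := by
        have := Real.log_le_log hδpos hδ3
        rwa [Real.log_mul (by positivity) (Real.exp_ne_zero _), Real.log_exp] at this
      have h3 : Real.log (a/2) ≤ Real.log A := Real.log_le_log (by positivity) hA1
      rw [hgi]
      linarith
    have hnormg : 2*K + 2 ≤ ‖gradF n γ‖ := by
      refine le_trans ?_ (coord_abs_le_norm (gradF n γ) k)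
      have : 2*K+2 ≤ -(gradF n γ k) := by linarith
      linarith [neg_le_abs (gradF n γ k)]
    have hr : 0 ≤ ‖γ - s‖ := norm_nonneg _
    nlinarith [hsumle, hnormg, hK0, hr]
end
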